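/- Let L ≥ 2, pm : Fin L → ℝ strictly increasing, a : Fin L → ℝ nonnegative, S the multiset of 2L extended metrics. Every element of R = {s ∈ S : s > pm (L-1)} fails to be among the L−1 smallest elements of S; i.e., at least L−1 elements of S are strictly smaller than any rejected element. -/
import Mathlib


/-- Soundness of DTS.2: any rejected candidate (extended metric above
`RT = pm (L-1)`) has at least `L - 1` elements of `S` strictly below it. -/
theorem dts_rejected_not_among_best
    (L : ℕ) (hL : 2 ≤ L)
    (pm a : Fin L → ℝ)
    (hpm : StrictMono pm)
    (ha : ∀ l, 0 ≤ a l)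
    (S : Multiset ℝ)
    (hS : S = (Finset.univ : Finset (Fin L)).val.map pm +
              (Finset.univ : Finset (Fin L)).val.map (fun l => pm l + a l)) :
    ∀ s ∈ S, pm ⟨L - 1, by omega⟩ < s →
      L - 1 ≤ (S.filter (fun t => t < s)).card := by
  intro s hs hRT
  subst hS
  rw [Multiset.filter_add, Multiset.card_add]
  have h1 : (Multiset.filter (fun t => t < s)
      ((Finset.univ : Finset (Fin L)).val.map pm)).card
      = (Finset.univ.filter (fun l : Fin L => pm l < s)).card := by
    rw [Multiset.filter_map]
    simp [Finset.filter, Function.comp]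
  have hsub : Finset.Iio (⟨L - 1, by omega⟩ : Fin L) ⊆
      Finset.univ.filter (fun l : Fin L => pm l < s) := by
    intro l hl
    simp only [Finset.mem_Iio] at hl
    simp only [Finset.mem_filter, Finset.mem_univ, true_and]
    exact lt_trans (hpm hl) hRT
  have hcard := Finset.card_le_card hsub
  have hIio : (Finset.Iio (⟨L - 1, by omega⟩ : Fin L)).card = L - 1 := by
    simp [Fin.card_Iio]
  omega
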